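/- For all positive integers n and N with 256·N⁸ < n, there exist real numbers x_{ij}, y_{ij} (1 ≤ i, j ≤ N) and z_i (1 ≤ i ≤ N), all strictly between 0 and n/4, such that: x_{ij} + y_{ij} = z_i for all i, j; the z_i are pairwise distinct; the values in the combined list consisting of all sums x_{ij} + y_{rs} with (r,s) ≠ (i,j), all sums x_{ij} + x_{rs}, and all sums y_{ij} + y_{rs} are pairwise distinct (apart from the equalities forced by commutativity of addition among the x-sums and among the y-sums); none of these sums equals any z_i; and none of these sums equals any x_{ij} or y_{rs}. -/

import Mathlib

namespace GSaux

lemma eqz (c t s : ℤ) (hc : 0 < c) (h : c * t = s) (h1 : -c < s) (h2 : s < c) :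
    t = 0 ∧ s = 0 := by
  have ht : t = 0 := by
    by_contra h0
    rcases lt_or_gt_of_ne h0 with hlt | hgt
    · have h3 : t ≤ -1 := by omega
      have h4 := mul_le_mul_of_nonneg_left h3 (le_of_lt hc)
      nlinarith
    · have h3 : (1:ℤ) ≤ t := by omega
      have h4 := mul_le_mul_of_nonneg_left h3 (le_of_lt hc)
      nlinarith
  refine ⟨ht, ?_⟩
  rw [ht, mul_zero] at h
  omega

def A (N : ℕ) : ℤ := 3 * (N : ℤ) ^ 6

def key (N : ℕ) (i j : Fin N) : ℤ := ((i : ℕ) : ℤ) * (N : ℤ) + ((j : ℕ) : ℤ)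

def Xv (N : ℕ) (i j : Fin N) : ℤ :=
  A N + key N i j + 2 * (N : ℤ) ^ 2 * (key N i j) ^ 2

def Zv (N : ℕ) (i : Fin N) : ℤ := 8 * A N * (((i : ℕ) : ℤ) + 1)

def Yv (N : ℕ) (i j : Fin N) : ℤ := Zv N i - Xv N i j

lemma key_bounds (N : ℕ) (i j : Fin N) :
    0 ≤ key N i j ∧ key N i j < (N : ℤ) ^ 2 := by
  have hi : ((i : ℕ) : ℤ) < N := by exact_mod_cast i.isLt
  have hj : ((j : ℕ) : ℤ) < N := by exact_mod_cast j.isLt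
  have hi0 : (0:ℤ) ≤ ((i : ℕ) : ℤ) := by positivity
  have hj0 : (0:ℤ) ≤ ((j : ℕ) : ℤ) := by positivity
  have hN0 : (0:ℤ) ≤ (N:ℤ) := by positivity
  constructor
  · unfold key
    nlinarith [mul_nonneg hi0 hN0]
  · unfold key
    nlinarith

lemma key_inj (N : ℕ) (i j r s : Fin N) (h : key N i j = key N r s) :
    i = r ∧ j = s := by
  have hN' : 0 < N := Nat.pos_of_ne_zero (by rintro rfl; exact i.elim0)
  have hNz : (0:ℤ) < (N:ℤ) := by exact_mod_cast hN'
  have hj : ((j : ℕ) : ℤ) < N := by exact_mod_cast j.isLt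
  have hs : ((s : ℕ) : ℤ) < N := by exact_mod_cast s.isLt
  have hj0 : (0:ℤ) ≤ ((j : ℕ) : ℤ) := by positivity
  have hs0 : (0:ℤ) ≤ ((s : ℕ) : ℤ) := by positivity
  have hmul : (N:ℤ) * (((i : ℕ) : ℤ) - ((r : ℕ) : ℤ)) = ((s : ℕ) : ℤ) - ((j : ℕ) : ℤ) := by
    unfold key at h; ring_nf; ring_nf at h; linarith
  obtain ⟨ht, hs'⟩ := eqz (N:ℤ) _ _ hNz hmul (by linarith) (by linarith)
  have hir : (i : ℕ) = (r : ℕ) := by omega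
  have hjs : (j : ℕ) = (s : ℕ) := by omega
  exact ⟨Fin.ext hir, Fin.ext hjs⟩

lemma X_lb (N : ℕ) (i j : Fin N) : A N ≤ Xv N i j := by
  obtain ⟨h0, _⟩ := key_bounds N i j
  have h1 : (0:ℤ) ≤ 2 * (N : ℤ) ^ 2 * (key N i j) ^ 2 := by positivity
  unfold Xv; linarith

lemma X_ub (N : ℕ) (i j : Fin N) : Xv N i j < 2 * A N := by
  have hN' : 0 < N := Nat.pos_of_ne_zero (by rintro rfl; exact i.elim0)
  obtain ⟨h0, h1⟩ := key_bounds N i j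
  have hm : (1:ℤ) ≤ (N:ℤ)^2 := by
    have : (1:ℤ) ≤ (N:ℤ) := by exact_mod_cast hN'
    nlinarith
  set k := key N i j with hk
  set m := (N:ℤ)^2 with hmdef
  have h6 : (N:ℤ)^6 = m^3 := by rw [hmdef]; ring
  have hk2 : k^2 ≤ (m-1)^2 := by nlinarith
  have hmul : 2*m*k^2 ≤ 2*m*(m-1)^2 :=
    mul_le_mul_of_nonneg_left hk2 (by positivity)
  unfold Xv A
  rw [← hk, h6]
  nlinarith

lemma sidon_core (m k1 k2 k3 k4 : ℤ) (hm : 0 < m)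
    (b1 : 0 ≤ k1 ∧ k1 < m) (b2 : 0 ≤ k2 ∧ k2 < m)
    (b3 : 0 ≤ k3 ∧ k3 < m) (b4 : 0 ≤ k4 ∧ k4 < m)
    (h : k1 + 2*m*k1^2 + (k2 + 2*m*k2^2) = k3 + 2*m*k3^2 + (k4 + 2*m*k4^2)) :
    (k1 = k3 ∧ k2 = k4) ∨ (k1 = k4 ∧ k2 = k3) := by
  have hkey : 2*m * (k3^2 + k4^2 - k1^2 - k2^2) = k1 + k2 - k3 - k4 := by
    linear_combination -h
  obtain ⟨ht, hs⟩ := eqz (2*m) _ _ (by linarith) hkey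
    (by obtain ⟨_, _⟩ := b1; obtain ⟨_,_⟩ := b2; obtain ⟨_,_⟩ := b3; obtain ⟨_,_⟩ := b4; linarith)
    (by obtain ⟨_, _⟩ := b1; obtain ⟨_,_⟩ := b2; obtain ⟨_,_⟩ := b3; obtain ⟨_,_⟩ := b4; linarith)
  have h2 : 2*((k1-k3)*(k1-k4)) = 0 := by linear_combination (k1 - k2 - k3 - k4) * hs - ht
  have h3 : (k1-k3)*(k1-k4) = 0 := by linarith
  rcases mul_eq_zero.mp h3 with h4 | h4
  · left; constructor <;> omega
  · right; constructor <;> omega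

lemma sidon (N : ℕ) (i j r s i' j' r' s' : Fin N)
    (h : Xv N i j + Xv N r s = Xv N i' j' + Xv N r' s') :
    ((i,j) = (i',j') ∧ (r,s) = (r',s')) ∨ ((i,j) = (r',s') ∧ (r,s) = (i',j')) := by
  have hN' : 0 < N := Nat.pos_of_ne_zero (by rintro rfl; exact i.elim0)
  have hm : (0:ℤ) < (N:ℤ)^2 := by positivity
  have hcore := sidon_core ((N:ℤ)^2) (key N i j) (key N r s) (key N i' j') (key N r' s')
    hm (key_bounds N i j) (key_bounds N r s) (key_bounds N i' j') (key_bounds N r' s')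
    (by unfold Xv at h; linarith)
  rcases hcore with ⟨h1, h2⟩ | ⟨h1, h2⟩
  · obtain ⟨e1, e2⟩ := key_inj N _ _ _ _ h1
    obtain ⟨e3, e4⟩ := key_inj N _ _ _ _ h2
    left; exact ⟨by rw [e1, e2], by rw [e3, e4]⟩
  · obtain ⟨e1, e2⟩ := key_inj N _ _ _ _ h1
    obtain ⟨e3, e4⟩ := key_inj N _ _ _ _ h2
    right; exact ⟨by rw [e1, e2], by rw [e3, e4]⟩

lemma X_inj (N : ℕ) (i j r s : Fin N) (h : Xv N i j = Xv N r s) :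
    i = r ∧ j = s := by
  have := sidon N i j i j r s r s (by linarith)
  rcases this with ⟨h1, _⟩ | ⟨h1, _⟩ <;>
    · rw [Prod.ext_iff] at h1; exact ⟨h1.1, h1.2⟩

end GSaux

set_option maxHeartbeats 2000000 in
/-- Lemma 6: for `256·N⁸ < n` one can choose numbers `x_{ij}, y_{ij}, z_i` in
`(0, n/4)` with `x_{ij} + y_{ij} = z_i`, the `z_i` distinct, and all other sums
`x_{ij} + y_{rs}` (`(r,s) ≠ (i,j)`), `x_{ij} + x_{rs}`, `y_{ij} + y_{rs}`
pairwise distinct (apart from commutativity), distinct from all `z_i`, and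
distinct from all `x_{ij}, y_{rs}`. -/
theorem generic_sums_exist (n N : ℕ) (hn : 0 < n) (hN : 0 < N)
    (h : 256 * N ^ 8 < n) :
    ∃ (x y : Fin N → Fin N → ℝ) (z : Fin N → ℝ),
      (∀ i j, 0 < x i j ∧ x i j < (n : ℝ) / 4) ∧
      (∀ i j, 0 < y i j ∧ y i j < (n : ℝ) / 4) ∧
      (∀ i, 0 < z i ∧ z i < (n : ℝ) / 4) ∧
      (∀ i j, x i j + y i j = z i) ∧
      Function.Injective z ∧
      -- the sums x_{ij} + y_{rs} with (r,s) ≠ (i,j) are pairwise distinct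
      (∀ i j r s i' j' r' s', (r, s) ≠ (i, j) → (r', s') ≠ (i', j') →
        x i j + y r s = x i' j' + y r' s' → (i, j, r, s) = (i', j', r', s')) ∧
      -- the sums x_{ij} + x_{rs} are pairwise distinct up to commutativity
      (∀ i j r s i' j' r' s', x i j + x r s = x i' j' + x r' s' →
        ((i, j) = (i', j') ∧ (r, s) = (r', s')) ∨
        ((i, j) = (r', s') ∧ (r, s) = (i', j'))) ∧
      -- the sums y_{ij} + y_{rs} are pairwise distinct up to commutativity
      (∀ i j r s i' j' r' s', y i j + y r s = y i' j' + y r' s' →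
        ((i, j) = (i', j') ∧ (r, s) = (r', s')) ∨
        ((i, j) = (r', s') ∧ (r, s) = (i', j'))) ∧
      -- sums of different kinds are distinct from each other
      (∀ i j r s i' j' r' s', (r, s) ≠ (i, j) →
        x i j + y r s ≠ x i' j' + x r' s') ∧
      (∀ i j r s i' j' r' s', (r, s) ≠ (i, j) →
        x i j + y r s ≠ y i' j' + y r' s') ∧
      (∀ i j r s i' j' r' s', x i j + x r s ≠ y i' j' + y r' s') ∧
      -- none of these sums equals any z_t
      (∀ i j r s t, (r, s) ≠ (i, j) → x i j + y r s ≠ z t) ∧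
      (∀ i j r s t, x i j + x r s ≠ z t) ∧
      (∀ i j r s t, y i j + y r s ≠ z t) ∧
      -- none of these sums equals any x_{tu} or y_{tu}
      (∀ i j r s t u, (r, s) ≠ (i, j) →
        x i j + y r s ≠ x t u ∧ x i j + y r s ≠ y t u) ∧
      (∀ i j r s t u, x i j + x r s ≠ x t u ∧ x i j + x r s ≠ y t u) ∧
      (∀ i j r s t u, y i j + y r s ≠ x t u ∧ y i j + y r s ≠ y t u) := by
  have hN1 : (1:ℤ) ≤ (N:ℤ) := by exact_mod_cast hN
  have hbig : (256:ℤ) * (N:ℤ)^8 < (n:ℤ) := by exact_mod_cast h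
  have hApos : (0:ℤ) < GSaux.A N := by
    have : (0:ℤ) < (N:ℤ)^6 := pow_pos (by linarith) 6
    unfold GSaux.A; linarith
  have hXl := GSaux.X_lb N
  have hXu := GSaux.X_ub N
  have h68 : (N:ℤ)^6 ≤ (N:ℤ)^8 := by
    nlinarith [mul_le_mul_of_nonneg_left (by nlinarith : (1:ℤ) ≤ (N:ℤ)^2)
      (pow_nonneg (by linarith : (0:ℤ) ≤ (N:ℤ)) 6)]
  have h78 : (N:ℤ)^7 ≤ (N:ℤ)^8 := by
    nlinarith [mul_le_mul_of_nonneg_left hN1 (pow_nonneg (by linarith : (0:ℤ) ≤ (N:ℤ)) 7)]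
  have hcap : 8 * GSaux.A N * (N:ℤ) * 4 < (n:ℤ) := by
    unfold GSaux.A; nlinarith
  have hZu : ∀ i : Fin N, GSaux.Zv N i ≤ 8 * GSaux.A N * (N:ℤ) := by
    intro i
    have hi : ((i:ℕ):ℤ) + 1 ≤ (N:ℤ) := by
      have := i.isLt; omega
    unfold GSaux.Zv
    nlinarith
  refine ⟨fun i j => ((GSaux.Xv N i j : ℤ) : ℝ),
          fun i j => ((GSaux.Yv N i j : ℤ) : ℝ),
          fun i => ((GSaux.Zv N i : ℤ) : ℝ),
          ?_, ?_, ?_, ?_, ?_, ?_, ?_, ?_, ?_, ?_, ?_, ?_, ?_, ?_, ?_, ?_, ?_⟩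
  all_goals try dsimp only
  -- 1: bounds on x
  · intro i j
    constructor
    · have : (0:ℤ) < GSaux.Xv N i j := by linarith [hXl i j]
      exact_mod_cast this
    · rw [lt_div_iff₀ (by norm_num : (0:ℝ) < 4)]
      have : GSaux.Xv N i j * 4 < (n:ℤ) := by
        have h1 := hXu i j
        have hA : GSaux.A N = 3*(N:ℤ)^6 := rfl
        rw [hA] at h1
        nlinarith
      exact_mod_cast this
  -- 2: bounds on y
  · intro i j
    have hr0 : (0:ℤ) ≤ ((i:ℕ):ℤ) := Int.natCast_nonneg _
    constructor
    · have : (0:ℤ) < GSaux.Yv N i j := by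
        unfold GSaux.Yv GSaux.Zv
        nlinarith [hXu i j]
      exact_mod_cast this
    · rw [lt_div_iff₀ (by norm_num : (0:ℝ) < 4)]
      have : GSaux.Yv N i j * 4 < (n:ℤ) := by
        have h1 := hZu i
        have h2 := hXl i j
        unfold GSaux.Yv
        linarith
      exact_mod_cast this
  -- 3: bounds on z
  · intro i
    have hr0 : (0:ℤ) ≤ ((i:ℕ):ℤ) := Int.natCast_nonneg _
    constructor
    · have : (0:ℤ) < GSaux.Zv N i := by
        unfold GSaux.Zv; nlinarith
      exact_mod_cast this
    · rw [lt_div_iff₀ (by norm_num : (0:ℝ) < 4)]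
      have : GSaux.Zv N i * 4 < (n:ℤ) := by
        have h1 := hZu i; linarith
      exact_mod_cast this
  -- 4: x + y = z
  · intro i j
    have : GSaux.Xv N i j + GSaux.Yv N i j = GSaux.Zv N i := by
      unfold GSaux.Yv; ring
    exact_mod_cast this
  -- 5: z injective
  · intro a b hab
    dsimp only at hab
    have h1 : GSaux.Zv N a = GSaux.Zv N b := by exact_mod_cast hab
    unfold GSaux.Zv at h1
    have h2 : ((a:ℕ):ℤ) = ((b:ℕ):ℤ) := by
      have hne : (8 * GSaux.A N : ℤ) ≠ 0 := by positivity
      have := mul_left_cancel₀ hne h1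
      linarith
    exact Fin.ext (by exact_mod_cast h2)
  -- 6: XY sums pairwise distinct
  · intro i j r s i' j' r' s' hne hne' heq
    have H : GSaux.Xv N i j + GSaux.Yv N r s = GSaux.Xv N i' j' + GSaux.Yv N r' s' := by
      exact_mod_cast heq
    unfold GSaux.Yv GSaux.Zv at H
    have hkey : 8 * GSaux.A N * (((r:ℕ):ℤ) - ((r':ℕ):ℤ)) =
        GSaux.Xv N i' j' + GSaux.Xv N r s - GSaux.Xv N i j - GSaux.Xv N r' s' := by
      linear_combination H
    obtain ⟨ht, hs⟩ := GSaux.eqz _ _ _ (by linarith) hkey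
      (by linarith [hXl i' j', hXl r s, hXu i j, hXu r' s'])
      (by linarith [hXu i' j', hXu r s, hXl i j, hXl r' s'])
    have hrr : r = r' := Fin.ext (by omega)
    have hX : GSaux.Xv N i j + GSaux.Xv N r' s' = GSaux.Xv N i' j' + GSaux.Xv N r s := by
      linarith
    rcases GSaux.sidon N i j r' s' i' j' r s hX with ⟨h1, h2⟩ | ⟨h1, h2⟩
    · rw [Prod.ext_iff] at h1 h2
      simp only [Prod.mk.injEq]
      exact ⟨h1.1, h1.2, hrr, h2.2.symm⟩
    · exact absurd h1.symm hne
  -- 7: XX sums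
  · intro i j r s i' j' r' s' heq
    have H : GSaux.Xv N i j + GSaux.Xv N r s = GSaux.Xv N i' j' + GSaux.Xv N r' s' := by
      exact_mod_cast heq
    exact GSaux.sidon N i j r s i' j' r' s' H
  -- 8: YY sums
  · intro i j r s i' j' r' s' heq
    have H : GSaux.Yv N i j + GSaux.Yv N r s = GSaux.Yv N i' j' + GSaux.Yv N r' s' := by
      exact_mod_cast heq
    unfold GSaux.Yv GSaux.Zv at H
    have hkey : 8 * GSaux.A N * ((((i:ℕ):ℤ) + ((r:ℕ):ℤ)) - (((i':ℕ):ℤ) + ((r':ℕ):ℤ))) =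
        GSaux.Xv N i j + GSaux.Xv N r s - GSaux.Xv N i' j' - GSaux.Xv N r' s' := by
      linear_combination H
    obtain ⟨ht, hs⟩ := GSaux.eqz _ _ _ (by linarith) hkey
      (by linarith [hXl i j, hXl r s, hXu i' j', hXu r' s'])
      (by linarith [hXu i j, hXu r s, hXl i' j', hXl r' s'])
    have hX : GSaux.Xv N i j + GSaux.Xv N r s = GSaux.Xv N i' j' + GSaux.Xv N r' s' := by
      linarith
    exact GSaux.sidon N i j r s i' j' r' s' hX
  -- 9: XY ≠ XX
  · intro i j r s i' j' r' s' hne heq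
    have H : GSaux.Xv N i j + GSaux.Yv N r s = GSaux.Xv N i' j' + GSaux.Xv N r' s' := by
      exact_mod_cast heq
    unfold GSaux.Yv GSaux.Zv at H
    have hp := mul_le_mul_of_nonneg_left (show (1:ℤ) ≤ ((r:ℕ):ℤ)+1 by omega)
      (by linarith : (0:ℤ) ≤ 8*GSaux.A N)
    linarith [hXl i j, hXu r s, hXu i' j', hXu r' s']
  -- 10: XY ≠ YY
  · intro i j r s i' j' r' s' hne heq
    have H : GSaux.Xv N i j + GSaux.Yv N r s = GSaux.Yv N i' j' + GSaux.Yv N r' s' := by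
      exact_mod_cast heq
    unfold GSaux.Yv GSaux.Zv at H
    have hkey : 8 * GSaux.A N * ((((i':ℕ):ℤ) + ((r':ℕ):ℤ) + 1) - ((r:ℕ):ℤ)) =
        GSaux.Xv N i j - GSaux.Xv N r s + GSaux.Xv N i' j' + GSaux.Xv N r' s' := by
      linear_combination -H
    obtain ⟨ht, hs⟩ := GSaux.eqz _ _ _ (by linarith) hkey
      (by linarith [hXl i j, hXu r s, hXl i' j', hXl r' s'])
      (by linarith [hXu i j, hXl r s, hXu i' j', hXu r' s'])
    have : (0:ℤ) < GSaux.Xv N i j - GSaux.Xv N r s + GSaux.Xv N i' j' + GSaux.Xv N r' s' := by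
      linarith [hXl i j, hXu r s, hXl i' j', hXl r' s']
    linarith
  -- 11: XX ≠ YY
  · intro i j r s i' j' r' s' heq
    have H : GSaux.Xv N i j + GSaux.Xv N r s = GSaux.Yv N i' j' + GSaux.Yv N r' s' := by
      exact_mod_cast heq
    unfold GSaux.Yv GSaux.Zv at H
    have hp1 := mul_le_mul_of_nonneg_left (show (1:ℤ) ≤ ((i':ℕ):ℤ)+1 by omega)
      (by linarith : (0:ℤ) ≤ 8*GSaux.A N)
    have hp2 := mul_le_mul_of_nonneg_left (show (1:ℤ) ≤ ((r':ℕ):ℤ)+1 by omega)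
      (by linarith : (0:ℤ) ≤ 8*GSaux.A N)
    linarith [hXu i j, hXu r s, hXu i' j', hXu r' s']
  -- 12: XY ≠ z
  · intro i j r s t hne heq
    have H : GSaux.Xv N i j + GSaux.Yv N r s = GSaux.Zv N t := by
      exact_mod_cast heq
    unfold GSaux.Yv GSaux.Zv at H
    have hkey : 8 * GSaux.A N * (((t:ℕ):ℤ) - ((r:ℕ):ℤ)) =
        GSaux.Xv N i j - GSaux.Xv N r s := by
      linear_combination -H
    obtain ⟨ht, hs⟩ := GSaux.eqz _ _ _ (by linarith) hkey
      (by linarith [hXl i j, hXu r s])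
      (by linarith [hXu i j, hXl r s])
    obtain ⟨e1, e2⟩ := GSaux.X_inj N i j r s (by linarith)
    exact hne (by rw [e1, e2])
  -- 13: XX ≠ z
  · intro i j r s t heq
    have H : GSaux.Xv N i j + GSaux.Xv N r s = GSaux.Zv N t := by
      exact_mod_cast heq
    unfold GSaux.Zv at H
    have hp := mul_le_mul_of_nonneg_left (show (1:ℤ) ≤ ((t:ℕ):ℤ)+1 by omega)
      (by linarith : (0:ℤ) ≤ 8*GSaux.A N)
    linarith [hXu i j, hXu r s]
  -- 14: YY ≠ z
  · intro i j r s t heq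
    have H : GSaux.Yv N i j + GSaux.Yv N r s = GSaux.Zv N t := by
      exact_mod_cast heq
    unfold GSaux.Yv GSaux.Zv at H
    have hkey : 8 * GSaux.A N * ((((i:ℕ):ℤ) + ((r:ℕ):ℤ) + 1) - ((t:ℕ):ℤ)) =
        GSaux.Xv N i j + GSaux.Xv N r s := by
      linear_combination H
    obtain ⟨ht, hs⟩ := GSaux.eqz _ _ _ (by linarith) hkey
      (by linarith [hXl i j, hXl r s])
      (by linarith [hXu i j, hXu r s])
    linarith [hXl i j, hXl r s]
  -- 15: XY ≠ x, y
  · intro i j r s t u hne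
    constructor
    · intro heq
      have H : GSaux.Xv N i j + GSaux.Yv N r s = GSaux.Xv N t u := by
        exact_mod_cast heq
      unfold GSaux.Yv GSaux.Zv at H
      have hp := mul_le_mul_of_nonneg_left (show (1:ℤ) ≤ ((r:ℕ):ℤ)+1 by omega)
        (by linarith : (0:ℤ) ≤ 8*GSaux.A N)
      linarith [hXl i j, hXu r s, hXu t u]
    · intro heq
      have H : GSaux.Xv N i j + GSaux.Yv N r s = GSaux.Yv N t u := by
        exact_mod_cast heq
      unfold GSaux.Yv GSaux.Zv at H
      have hkey : 8 * GSaux.A N * (((t:ℕ):ℤ) - ((r:ℕ):ℤ)) =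
          GSaux.Xv N i j - GSaux.Xv N r s + GSaux.Xv N t u := by
        linear_combination -H
      obtain ⟨ht, hs⟩ := GSaux.eqz _ _ _ (by linarith) hkey
        (by linarith [hXl i j, hXu r s, hXl t u])
        (by linarith [hXu i j, hXl r s, hXu t u])
      linarith [hXl i j, hXu r s, hXl t u]
  -- 16: XX ≠ x, y
  · intro i j r s t u
    constructor
    · intro heq
      have H : GSaux.Xv N i j + GSaux.Xv N r s = GSaux.Xv N t u := by
        exact_mod_cast heq
      linarith [hXl i j, hXl r s, hXu t u, hXl t u]
    · intro heq
      have H : GSaux.Xv N i j + GSaux.Xv N r s = GSaux.Yv N t u := by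
        exact_mod_cast heq
      unfold GSaux.Yv GSaux.Zv at H
      have hp := mul_le_mul_of_nonneg_left (show (1:ℤ) ≤ ((t:ℕ):ℤ)+1 by omega)
        (by linarith : (0:ℤ) ≤ 8*GSaux.A N)
      linarith [hXu i j, hXu r s, hXu t u]
  -- 17: YY ≠ x, y
  · intro i j r s t u
    constructor
    · intro heq
      have H : GSaux.Yv N i j + GSaux.Yv N r s = GSaux.Xv N t u := by
        exact_mod_cast heq
      unfold GSaux.Yv GSaux.Zv at H
      have hp1 := mul_le_mul_of_nonneg_left (show (1:ℤ) ≤ ((i:ℕ):ℤ)+1 by omega)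
        (by linarith : (0:ℤ) ≤ 8*GSaux.A N)
      have hp2 := mul_le_mul_of_nonneg_left (show (1:ℤ) ≤ ((r:ℕ):ℤ)+1 by omega)
        (by linarith : (0:ℤ) ≤ 8*GSaux.A N)
      linarith [hXu i j, hXu r s, hXu t u]
    · intro heq
      have H : GSaux.Yv N i j + GSaux.Yv N r s = GSaux.Yv N t u := by
        exact_mod_cast heq
      unfold GSaux.Yv GSaux.Zv at H
      have hkey : 8 * GSaux.A N * ((((i:ℕ):ℤ) + ((r:ℕ):ℤ) + 1) - ((t:ℕ):ℤ)) =
          GSaux.Xv N i j + GSaux.Xv N r s - GSaux.Xv N t u := by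
        linear_combination H
      obtain ⟨ht, hs⟩ := GSaux.eqz _ _ _ (by linarith) hkey
        (by linarith [hXl i j, hXl r s, hXu t u])
        (by linarith [hXu i j, hXu r s, hXl t u])
      linarith [hXl i j, hXl r s, hXu t u]
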